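/- Let k ≥ 2 and let X₁, X₂, … be i.i.d. ℝ^k-valued random vectors with E X₁ = 0, E‖X₁‖⁴ < ∞, covariance matrix Σ = Cov(X₁), and 1'Σ1 > 0. Define f_Σ(x) = δ(Σ)'·vec(xx' − Σ) for x ∈ ℝ^k. Then the estimator α_C(Σ̂_n) is asymptotically linear: √n·(α_C(Σ̂_n) − α_C(Σ)) − n^{−1/2}·Σ_{i=1}^n f_Σ(X_i) converges to 0 in probability as n → ∞. -/

import Mathlib

open MeasureTheory ProbabilityTheory Filter Matrix Finset Asymptotics

noncomputable section

open scoped Classical in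
/-- Index set for the on-and-below-diagonal entries of a `k × k` matrix;
its cardinality is `q = k(k+1)/2`. -/
abbrev SymIdx (k : ℕ) : Type := {p : Fin k × Fin k // (p.2 : ℕ) ≤ (p.1 : ℕ)}

/-- `vec(Σ)`: the vector of on-and-below-diagonal entries of a matrix. -/
def vecm {k : ℕ} (S : Matrix (Fin k) (Fin k) ℝ) : SymIdx k → ℝ := fun p => S p.1.1 p.1.2

/-- Reconstruct a symmetric matrix from its on-and-below-diagonal entries. -/
def unvec {k : ℕ} (v : SymIdx k → ℝ) : Matrix (Fin k) (Fin k) ℝ :=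
  Matrix.of fun i j =>
    if h : (j : ℕ) ≤ (i : ℕ) then v ⟨(i, j), h⟩ else v ⟨(j, i), le_of_not_ge h⟩

/-- `1'Σ1`, the sum of all entries of a matrix. -/
def oneSum {k : ℕ} (S : Matrix (Fin k) (Fin k) ℝ) : ℝ := ∑ i, ∑ j, S i j

/-- Cronbach's coefficient alpha `α_C(Σ) = (k/(k-1))·(1 - tr(Σ)/(1'Σ1))`. -/
def alphaC {k : ℕ} (S : Matrix (Fin k) (Fin k) ℝ) : ℝ :=
  ((k : ℝ) / ((k : ℝ) - 1)) * (1 - S.trace / oneSum S)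

/-- Cronbach's alpha as a function of `vec(Σ)`. -/
def alphaVec (k : ℕ) : (SymIdx k → ℝ) → ℝ := fun v => alphaC (unvec v)

/-- The gradient `δ(Σ)` of `vec(Σ) ↦ α_C(Σ)` at `vec(Σ)`. -/
def deltaVec {k : ℕ} (S : Matrix (Fin k) (Fin k) ℝ) : SymIdx k → ℝ :=
  fun p => fderiv ℝ (alphaVec k) (vecm S) (Pi.single p 1)

/-- Outer product `x x'`. -/
def outer {k : ℕ} (x : Fin k → ℝ) : Matrix (Fin k) (Fin k) ℝ := Matrix.of fun a b => x a * x b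

/-- Sample mean of the first `n` observations. -/
def sampleMean (k n : ℕ) (X : ℕ → Fin k → ℝ) : Fin k → ℝ :=
  (n : ℝ)⁻¹ • ∑ i ∈ range n, X i

/-- Sample covariance matrix of the first `n` observations. -/
def sampleCov (k n : ℕ) (X : ℕ → Fin k → ℝ) : Matrix (Fin k) (Fin k) ℝ :=
  ((n : ℝ) - 1)⁻¹ • ∑ i ∈ range n, outer (fun a => X i a - sampleMean k n X a)

/-- Convergence in distribution: weak convergence of the laws. -/
def TendstoInDistribution {Ω E : Type*} [MeasurableSpace Ω] [MeasurableSpace E]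
    [TopologicalSpace E] (μ : Measure Ω) (Y : ℕ → Ω → E) (ν : Measure E) : Prop :=
  ∀ f : BoundedContinuousFunction E ℝ,
    Tendsto (fun n => ∫ ω, f (Y n ω) ∂μ) atTop (nhds (∫ x, f x ∂ν))

/-- The multivariate Gaussian distribution with mean `0` and covariance matrix `C`
(defined as the law of `C^{1/2} Z` for a standard Gaussian vector `Z`; junk value if
`C` is not positive semidefinite). -/
def mvGauss {ι : Type*} [Fintype ι] [DecidableEq ι] (C : Matrix ι ι ℝ) : Measure (ι → ℝ) :=
  letI := Classical.propDecidable C.PosSemidef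
  if h : C.PosSemidef then
    (Measure.pi fun _ : ι => gaussianReal 0 1).map (fun x => (h.1.eigenvectorUnitary.1 *
      diagonal ((↑) ∘ (fun i => Real.sqrt (h.1.eigenvalues i))) *
      (star h.1.eigenvectorUnitary : Matrix ι ι ℝ)) *ᵥ x)
  else 0

open scoped Classical in
/-- The pooled two-sample ADF variance estimator `σ̂²` of Maydeu-Olivares et al. -/
def pooledVar2 (k1 k2 n1 n2 : ℕ) (X : ℕ → Fin k1 → ℝ) (Y : ℕ → Fin k2 → ℝ) : ℝ :=
  ((n2 : ℝ) / ((n1 : ℝ) + (n2 : ℝ))) * (((n1 : ℝ) - 1)⁻¹ * ∑ i ∈ range n1,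
      (∑ p, deltaVec (sampleCov k1 n1 X) p *
        (vecm (outer fun a => X i a - sampleMean k1 n1 X a) p
          - vecm (sampleCov k1 n1 X) p)) ^ 2)
  + ((n1 : ℝ) / ((n1 : ℝ) + (n2 : ℝ))) * (((n2 : ℝ) - 1)⁻¹ * ∑ i ∈ range n2,
      (∑ p, deltaVec (sampleCov k2 n2 Y) p *
        (vecm (outer fun a => Y i a - sampleMean k2 n2 Y a) p
          - vecm (sampleCov k2 n2 Y) p)) ^ 2)

/-- The studentized two-sample statistic `T_n = M_n / σ̂`. -/
def Tstat2 (k1 k2 n1 n2 : ℕ) (X : ℕ → Fin k1 → ℝ) (Y : ℕ → Fin k2 → ℝ) : ℝ :=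
  Real.sqrt ((n1 : ℝ) * (n2 : ℝ) / ((n1 : ℝ) + (n2 : ℝ))) *
    (alphaC (sampleCov k1 n1 X) - alphaC (sampleCov k2 n2 Y))
  / Real.sqrt (pooledVar2 k1 k2 n1 n2 X Y)

/-- The studentized statistic computed from pooled data `Z` (first `n1` vectors form
group 1, the remaining `n2` form group 2). -/
def TstatF (k n1 n2 : ℕ) (Z : Fin (n1 + n2) → Fin k → ℝ) : ℝ :=
  Tstat2 k k n1 n2
    (fun i => if h : i < n1 + n2 then Z ⟨i, h⟩ else 0)
    (fun i => if h : n1 + i < n1 + n2 then Z ⟨n1 + i, h⟩ else 0)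

/-- The permutation distribution function `R_n(x) = (N!)^{-1} Σ_π 1{T_n^π ≤ x}`. -/
def permDistF (k n1 n2 : ℕ) (Z : Fin (n1 + n2) → Fin k → ℝ) (x : ℝ) : ℝ :=
  ((n1 + n2).factorial : ℝ)⁻¹ * ∑ π : Equiv.Perm (Fin (n1 + n2)),
    if TstatF k n1 n2 (fun i => Z (π i)) ≤ x then 1 else 0

open scoped Classical in
/-- The `(1-α)`-quantile `c_n^π(α)` of the permutation distribution. -/
def permCrit (k n1 n2 : ℕ) (a : ℝ) (Z : Fin (n1 + n2) → Fin k → ℝ) : ℝ :=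
  sInf {x : ℝ | 1 - a ≤ permDistF k n1 n2 Z x}

/-- Permutation probability of `{T_n^π > c}`. -/
def permGt (k n1 n2 : ℕ) (Z : Fin (n1 + n2) → Fin k → ℝ) (c : ℝ) : ℝ :=
  ((n1 + n2).factorial : ℝ)⁻¹ * ∑ π : Equiv.Perm (Fin (n1 + n2)),
    if c < TstatF k n1 n2 (fun i => Z (π i)) then 1 else 0

open scoped Classical in
/-- Permutation probability of `{T_n^π = c}`. -/
def permEq (k n1 n2 : ℕ) (Z : Fin (n1 + n2) → Fin k → ℝ) (c : ℝ) : ℝ :=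
  ((n1 + n2).factorial : ℝ)⁻¹ * ∑ π : Equiv.Perm (Fin (n1 + n2)),
    if TstatF k n1 n2 (fun i => Z (π i)) = c then 1 else 0

open scoped Classical in
/-- The randomization constant `γ_n^π(α)` of the classical randomized permutation test. -/
def permGamma (k n1 n2 : ℕ) (a : ℝ) (Z : Fin (n1 + n2) → Fin k → ℝ) : ℝ :=
  if permEq k n1 n2 Z (permCrit k n1 n2 a Z) = 0 then 0
  else (a - permGt k n1 n2 Z (permCrit k n1 n2 a Z))
        / permEq k n1 n2 Z (permCrit k n1 n2 a Z)

open scoped Classical in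
/-- The randomized permutation test `ψ_n = 1{T_n > c_n^π(α)} + γ_n^π(α)·1{T_n = c_n^π(α)}`. -/
def permTest (k n1 n2 : ℕ) (a : ℝ) (Z : Fin (n1 + n2) → Fin k → ℝ) : ℝ :=
  (if permCrit k n1 n2 a Z < TstatF k n1 n2 Z then 1 else 0)
  + permGamma k n1 n2 a Z * (if TstatF k n1 n2 Z = permCrit k n1 n2 a Z then 1 else 0)

/-- Pooling two samples: the first `n1` observations come from `X`, the rest from `Y`. -/
def pool (k n1 : ℕ) (X Y : ℕ → Fin k → ℝ) : ℕ → Fin k → ℝ :=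
  fun i => if i < n1 then X i else Y (i - n1)

/-- The conditional parametric-bootstrap distribution function `F_n⋆(x)` of the
studentized statistic, for observed group covariance matrices `S1`, `S2`. -/
def bootCDF (k1 k2 n1 n2 : ℕ) (S1 : Matrix (Fin k1) (Fin k1) ℝ)
    (S2 : Matrix (Fin k2) (Fin k2) ℝ) (x : ℝ) : ℝ :=
  (((Measure.pi fun _ : Fin n1 => mvGauss S1).prod
      (Measure.pi fun _ : Fin n2 => mvGauss S2))
    {p | Tstat2 k1 k2 n1 n2
        (fun i => if h : i < n1 then p.1 ⟨i, h⟩ else 0)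
        (fun i => if h : i < n2 then p.2 ⟨i, h⟩ else 0) ≤ x}).toReal

/-- The bootstrap critical value `c_n⋆(α)`. -/
def bootCrit (k1 k2 n1 n2 : ℕ) (a : ℝ) (S1 : Matrix (Fin k1) (Fin k1) ℝ)
    (S2 : Matrix (Fin k2) (Fin k2) ℝ) : ℝ :=
  sInf {x : ℝ | 1 - a ≤ bootCDF k1 k2 n1 n2 S1 S2 x}

end
open scoped Topology

noncomputable section CronbachHelpers

variable {Ω : Type*} [MeasurableSpace Ω] {μ : MeasureTheory.Measure Ω}

/-- Uniform (eventual) tightness of a sequence of real random variables. -/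
def MyTight (μ : MeasureTheory.Measure Ω) (W : ℕ → Ω → ℝ) : Prop :=
  ∀ η : ENNReal, 0 < η → ∃ K : ℝ, 0 < K ∧ ∀ᶠ n in atTop, μ {ω | K ≤ |W n ω|} ≤ η

lemma tim_zero_of_forall {F : ℕ → Ω → ℝ}
    (h : ∀ ε : ℝ, 0 < ε → ∀ η : ENNReal, 0 < η → ∀ᶠ n in atTop, μ {ω | ε ≤ |F n ω|} ≤ η) :
    TendstoInMeasure μ F atTop 0 := by
  rw [tendstoInMeasure_iff_dist]
  intro ε hε
  have : (fun n => μ {x | ε ≤ dist (F n x) ((0 : Ω → ℝ) x)}) =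
      fun n => μ {ω | ε ≤ |F n ω|} := by
    funext n; congr 1; ext ω; simp [Real.dist_eq]
  rw [this]
  exact ENNReal.tendsto_nhds_zero.2 fun η hη => h ε hε η hη

lemma tim_zero_elim {F : ℕ → Ω → ℝ} (h : TendstoInMeasure μ F atTop 0) :
    ∀ ε : ℝ, 0 < ε → ∀ η : ENNReal, 0 < η → ∀ᶠ n in atTop, μ {ω | ε ≤ |F n ω|} ≤ η := by
  intro ε hε η hη
  have h2 := tendstoInMeasure_iff_dist.1 h ε hε
  have : (fun n => μ {x | ε ≤ dist (F n x) ((0 : Ω → ℝ) x)}) =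
      fun n => μ {ω | ε ≤ |F n ω|} := by
    funext n; congr 1; ext ω; simp [Real.dist_eq]
  rw [this] at h2
  exact ENNReal.tendsto_nhds_zero.1 h2 η hη

lemma tim_congr {F G : ℕ → Ω → ℝ} (hFG : ∀ᶠ n in atTop, ∀ ω, F n ω = G n ω)
    (h : TendstoInMeasure μ F atTop 0) : TendstoInMeasure μ G atTop 0 := by
  refine tim_zero_of_forall fun ε hε η hη => ?_
  filter_upwards [hFG, tim_zero_elim h ε hε η hη] with n hn h2
  have : {ω | ε ≤ |G n ω|} = {ω | ε ≤ |F n ω|} := by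
    ext ω; simp only [Set.mem_setOf_eq, hn ω]
  rw [this]; exact h2

lemma tim_add {F G : ℕ → Ω → ℝ} (hF : TendstoInMeasure μ F atTop 0)
    (hG : TendstoInMeasure μ G atTop 0) :
    TendstoInMeasure μ (fun n ω => F n ω + G n ω) atTop 0 := by
  refine tim_zero_of_forall fun ε hε η hη => ?_
  have hη2 : 0 < η / 2 := ENNReal.half_pos hη.ne'
  filter_upwards [tim_zero_elim hF (ε/2) (by positivity) (η/2) hη2,
    tim_zero_elim hG (ε/2) (by positivity) (η/2) hη2] with n h1 h2
  have hsub : {ω | ε ≤ |F n ω + G n ω|} ⊆ {ω | ε/2 ≤ |F n ω|} ∪ {ω | ε/2 ≤ |G n ω|} := by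
    intro ω hω
    by_contra hc
    simp only [Set.mem_union, Set.mem_setOf_eq, not_or, not_le] at hc
    have := abs_add_le (F n ω) (G n ω)
    simp only [Set.mem_setOf_eq] at hω
    linarith [hc.1, hc.2]
  calc μ {ω | ε ≤ |F n ω + G n ω|} ≤ μ ({ω | ε/2 ≤ |F n ω|} ∪ {ω | ε/2 ≤ |G n ω|}) :=
        measure_mono hsub
    _ ≤ μ {ω | ε/2 ≤ |F n ω|} + μ {ω | ε/2 ≤ |G n ω|} := measure_union_le _ _
    _ ≤ η/2 + η/2 := add_le_add h1 h2
    _ = η := ENNReal.add_halves η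

lemma tim_neg {F : ℕ → Ω → ℝ} (hF : TendstoInMeasure μ F atTop 0) :
    TendstoInMeasure μ (fun n ω => -F n ω) atTop 0 := by
  refine tim_zero_of_forall fun ε hε η hη => ?_
  filter_upwards [tim_zero_elim hF ε hε η hη] with n h1
  simpa [abs_neg] using h1

lemma tim_zero_fun : TendstoInMeasure μ (fun (_ : ℕ) (_ : Ω) => (0:ℝ)) atTop 0 := by
  refine tim_zero_of_forall fun ε hε η hη => ?_
  filter_upwards with n
  have : {ω : Ω | ε ≤ |(0:ℝ)|} = ∅ := by ext ω; simp; linarith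
  rw [this]; simp

lemma tim_const_mul {F : ℕ → Ω → ℝ} (c : ℝ) (hF : TendstoInMeasure μ F atTop 0) :
    TendstoInMeasure μ (fun n ω => c * F n ω) atTop 0 := by
  refine tim_zero_of_forall fun ε hε η hη => ?_
  have hc1 : (0:ℝ) < |c| + 1 := by positivity
  filter_upwards [tim_zero_elim hF (ε/(|c|+1)) (by positivity) η hη] with n h1
  refine le_trans (measure_mono ?_) h1
  intro ω hω
  simp only [Set.mem_setOf_eq] at hω ⊢
  rw [abs_mul] at hω
  rw [div_le_iff₀ hc1]
  nlinarith [abs_nonneg (F n ω), abs_nonneg c]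

lemma tim_sum {ι : Type*} (s : Finset ι) (F : ι → ℕ → Ω → ℝ)
    (h : ∀ i ∈ s, TendstoInMeasure μ (F i) atTop 0) :
    TendstoInMeasure μ (fun n ω => ∑ i ∈ s, F i n ω) atTop 0 := by
  classical
  induction s using Finset.induction_on with
  | empty => simpa using (tim_zero_fun (μ := μ))
  | @insert a s' hx ih =>
    have := tim_add (h a (mem_insert_self a s')) (ih fun i hi => h i (mem_insert_of_mem hi))
    refine tim_congr ?_ this
    filter_upwards with n ω
    rw [Finset.sum_insert hx]

lemma myTight_of_tim {W : ℕ → Ω → ℝ} (h : TendstoInMeasure μ W atTop 0) : MyTight μ W :=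
  fun η hη => ⟨1, one_pos, tim_zero_elim h 1 one_pos η hη⟩

lemma myTight_congr {W V : ℕ → Ω → ℝ} (hWV : ∀ᶠ n in atTop, ∀ ω, W n ω = V n ω)
    (h : MyTight μ W) : MyTight μ V := by
  intro η hη
  obtain ⟨K, hK, hKn⟩ := h η hη
  refine ⟨K, hK, ?_⟩
  filter_upwards [hWV, hKn] with n hn h1
  have : {ω | K ≤ |V n ω|} = {ω | K ≤ |W n ω|} := by
    ext ω; simp only [Set.mem_setOf_eq, hn ω]
  rw [this]; exact h1

lemma myTight_mono {W V : ℕ → Ω → ℝ} (hWV : ∀ᶠ n in atTop, ∀ ω, |W n ω| ≤ |V n ω|)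
    (h : MyTight μ V) : MyTight μ W := by
  intro η hη
  obtain ⟨K, hK, hKn⟩ := h η hη
  refine ⟨K, hK, ?_⟩
  filter_upwards [hWV, hKn] with n hn h1
  refine le_trans (measure_mono ?_) h1
  intro ω hω
  simp only [Set.mem_setOf_eq] at hω ⊢
  exact le_trans hω (hn ω)

lemma myTight_add {W V : ℕ → Ω → ℝ} (hW : MyTight μ W) (hV : MyTight μ V) :
    MyTight μ (fun n ω => W n ω + V n ω) := by
  intro η hη
  have hη2 : 0 < η / 2 := ENNReal.half_pos hη.ne'
  obtain ⟨K1, hK1, h1⟩ := hW (η/2) hη2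
  obtain ⟨K2, hK2, h2⟩ := hV (η/2) hη2
  refine ⟨K1 + K2, by positivity, ?_⟩
  filter_upwards [h1, h2] with n hn1 hn2
  have hsub : {ω | K1 + K2 ≤ |W n ω + V n ω|} ⊆ {ω | K1 ≤ |W n ω|} ∪ {ω | K2 ≤ |V n ω|} := by
    intro ω hω
    by_contra hc
    simp only [Set.mem_union, Set.mem_setOf_eq, not_or, not_le] at hc
    have := abs_add_le (W n ω) (V n ω)
    simp only [Set.mem_setOf_eq] at hω
    linarith [hc.1, hc.2]
  calc μ {ω | K1 + K2 ≤ |W n ω + V n ω|}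
      ≤ μ ({ω | K1 ≤ |W n ω|} ∪ {ω | K2 ≤ |V n ω|}) := measure_mono hsub
    _ ≤ μ {ω | K1 ≤ |W n ω|} + μ {ω | K2 ≤ |V n ω|} := measure_union_le _ _
    _ ≤ η/2 + η/2 := add_le_add hn1 hn2
    _ = η := ENNReal.add_halves η

lemma myTight_abs {W : ℕ → Ω → ℝ} (h : MyTight μ W) : MyTight μ (fun n ω => |W n ω|) := by
  intro η hη
  obtain ⟨K, hK, hKn⟩ := h η hη
  exact ⟨K, hK, by simpa [abs_abs] using hKn⟩

lemma myTight_sum {ι : Type*} (s : Finset ι) (F : ι → ℕ → Ω → ℝ)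
    (h : ∀ i ∈ s, MyTight μ (F i)) :
    MyTight μ (fun n ω => ∑ i ∈ s, F i n ω) := by
  classical
  induction s using Finset.induction_on with
  | empty =>
    simpa using myTight_of_tim (tim_zero_fun (μ := μ))
  | @insert a s' hx ih =>
    have := myTight_add (h a (mem_insert_self a s')) (ih fun i hi => h i (mem_insert_of_mem hi))
    refine myTight_congr ?_ this
    filter_upwards with n ω
    rw [Finset.sum_insert hx]

lemma tight_mul_tim {W V : ℕ → Ω → ℝ} (hW : MyTight μ W)
    (hV : TendstoInMeasure μ V atTop 0) :
    TendstoInMeasure μ (fun n ω => W n ω * V n ω) atTop 0 := by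
  refine tim_zero_of_forall fun ε hε η hη => ?_
  have hη2 : 0 < η / 2 := ENNReal.half_pos hη.ne'
  obtain ⟨K, hK, h1⟩ := hW (η/2) hη2
  filter_upwards [h1, tim_zero_elim hV (ε/K) (by positivity) (η/2) hη2] with n hn1 hn2
  have hsub : {ω | ε ≤ |W n ω * V n ω|} ⊆ {ω | K ≤ |W n ω|} ∪ {ω | ε/K ≤ |V n ω|} := by
    intro ω hω
    by_contra hc
    simp only [Set.mem_union, Set.mem_setOf_eq, not_or, not_le] at hc
    simp only [Set.mem_setOf_eq, abs_mul] at hω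
    have h3 : |W n ω| * |V n ω| < K * (ε/K) :=
      mul_lt_mul'' hc.1 hc.2 (abs_nonneg _) (abs_nonneg _)
    rw [mul_div_cancel₀ _ hK.ne'] at h3
    linarith
  calc μ {ω | ε ≤ |W n ω * V n ω|}
      ≤ μ ({ω | K ≤ |W n ω|} ∪ {ω | ε/K ≤ |V n ω|}) := measure_mono hsub
    _ ≤ μ {ω | K ≤ |W n ω|} + μ {ω | ε/K ≤ |V n ω|} := measure_union_le _ _
    _ ≤ η/2 + η/2 := add_le_add hn1 hn2
    _ = η := ENNReal.add_halves η

lemma myTight_of_variance [IsProbabilityMeasure μ] {W : ℕ → Ω → ℝ} {C : ℝ}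
    (hmem : ∀ n, MemLp (W n) 2 μ) (hmean : ∀ n, ∫ ω, W n ω ∂μ = 0)
    (hvar : ∀ n, variance (W n) μ ≤ C) : MyTight μ W := by
  intro η hη
  have hC : 0 ≤ C := le_trans (variance_nonneg (W 0) μ) (hvar 0)
  obtain ⟨t, ht, htη⟩ : ∃ t : ℝ, 0 < t ∧ ENNReal.ofReal t ≤ η := by
    rcases eq_or_ne η ⊤ with h | h
    · exact ⟨1, one_pos, by simp [h]⟩
    · exact ⟨η.toReal, ENNReal.toReal_pos hη.ne' h, by rw [ENNReal.ofReal_toReal h]⟩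
  set K : ℝ := Real.sqrt (C / t) + 1 with hKdef
  have hK : 0 < K := by positivity
  have hCK : C / K ^ 2 ≤ t := by
    have h1 : Real.sqrt (C / t) ^ 2 = C / t := Real.sq_sqrt (by positivity)
    have h2 : t * Real.sqrt (C / t) ^ 2 = C := by
      rw [h1]; field_simp
    have hKs : K ^ 2 = Real.sqrt (C/t) ^ 2 + 2 * Real.sqrt (C/t) + 1 := by
      rw [hKdef]; ring
    rw [div_le_iff₀ (by positivity), hKs]
    nlinarith [Real.sqrt_nonneg (C / t), ht.le]
  refine ⟨K, hK, ?_⟩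
  filter_upwards with n
  have hcheb := meas_ge_le_variance_div_sq (μ := μ) (hmem n) hK
  have heq : {ω | K ≤ |W n ω - μ[W n]|} = {ω | K ≤ |W n ω|} := by
    have : μ[W n] = 0 := hmean n
    simp [this]
  rw [heq] at hcheb
  refine le_trans hcheb (le_trans (ENNReal.ofReal_le_ofReal ?_) htη)
  exact le_trans (by gcongr; exact hvar n) hCK

lemma tim_remainder {q : Type*} [Fintype q] [IsProbabilityMeasure μ]
    {f : (q → ℝ) → ℝ} {L : (q → ℝ) →L[ℝ] ℝ} {v₀ : q → ℝ}
    (hf : HasFDerivAt f L v₀) {Y : ℕ → Ω → q → ℝ} {r : ℕ → ℝ}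
    (hY : ∀ n, AEStronglyMeasurable (Y n) μ)
    (hae : ∀ᵐ ω ∂μ, Tendsto (fun n => Y n ω) atTop (𝓝 v₀))
    (htight : MyTight μ (fun n ω => r n * ‖Y n ω - v₀‖)) :
    TendstoInMeasure μ (fun n ω => r n * (f (Y n ω) - f v₀ - L (Y n ω - v₀))) atTop 0 := by
  refine tim_zero_of_forall fun ε hε η hη => ?_
  have hη2 : 0 < η / 2 := ENNReal.half_pos hη.ne'
  obtain ⟨K, hK, h1⟩ := htight (η/2) hη2
  have hc : (0:ℝ) < ε / (2 * K) := by positivity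
  have hlo := hf.isLittleO
  have hev := (hlo.def hc)
  rw [Metric.eventually_nhds_iff] at hev
  obtain ⟨δ, hδ, hδ'⟩ := hev
  have hYtim : TendstoInMeasure μ Y atTop (fun _ => v₀) :=
    tendstoInMeasure_of_tendsto_ae hY (by filter_upwards [hae] with ω h using h)
  have h2 := ENNReal.tendsto_nhds_zero.1 (tendstoInMeasure_iff_dist.1 hYtim δ hδ) (η/2) hη2
  filter_upwards [h1, h2] with n hn1 hn2
  have hsub : {ω | ε ≤ |r n * (f (Y n ω) - f v₀ - L (Y n ω - v₀))|}
      ⊆ {x | δ ≤ dist (Y n x) v₀} ∪ {ω | K ≤ |r n * ‖Y n ω - v₀‖|} := by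
    intro ω hω
    by_contra hc'
    simp only [Set.mem_union, Set.mem_setOf_eq, not_or, not_le] at hc'
    obtain ⟨hd, hK'⟩ := hc'
    have hb := hδ' hd
    simp only [Real.norm_eq_abs] at hb
    simp only [Set.mem_setOf_eq] at hω
    rw [abs_mul] at hω hK'
    rw [abs_norm] at hK'
    have hrem : |f (Y n ω) - f v₀ - L (Y n ω - v₀)| ≤ ε / (2*K) * ‖Y n ω - v₀‖ := by
      have := hb
      rwa [← dist_eq_norm] at this
    have h4 : |r n| * |f (Y n ω) - f v₀ - L (Y n ω - v₀)| ≤ ε/(2*K) * (|r n| * ‖Y n ω - v₀‖) := by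
      rw [← mul_assoc, mul_comm (ε/(2*K)) (|r n|), mul_assoc]
      exact mul_le_mul_of_nonneg_left hrem (abs_nonneg _)
    have h5 : ε/(2*K) * (|r n| * ‖Y n ω - v₀‖) ≤ ε/(2*K) * K :=
      mul_le_mul_of_nonneg_left hK'.le hc.le
    have h6 : ε/(2*K) * K = ε/2 := by field_simp
    linarith
  calc μ {ω | ε ≤ |r n * (f (Y n ω) - f v₀ - L (Y n ω - v₀))|}
      ≤ μ ({x | δ ≤ dist (Y n x) v₀} ∪ {ω | K ≤ |r n * ‖Y n ω - v₀‖|}) := measure_mono hsub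
    _ ≤ μ {x | δ ≤ dist (Y n x) v₀} + μ {ω | K ≤ |r n * ‖Y n ω - v₀‖|} := measure_union_le _ _
    _ ≤ η/2 + η/2 := add_le_add hn2 hn1
    _ = η := ENNReal.add_halves η

end CronbachHelpers
section MatLems
open Finset Matrix

lemma unvec_vecm {k : ℕ} {M : Matrix (Fin k) (Fin k) ℝ} (hM : ∀ a b, M a b = M b a) :
    unvec (vecm M) = M := by
  ext i j
  simp only [unvec, vecm, Matrix.of_apply]
  split
  · rfl
  · exact hM j i

lemma differentiableAt_alphaVec {k : ℕ} {v₀ : SymIdx k → ℝ}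
    (h : oneSum (unvec v₀) ≠ 0) :
    DifferentiableAt ℝ (alphaVec k) v₀ := by
  have h1 : ∀ (i j : Fin k), DifferentiableAt ℝ (fun v : SymIdx k → ℝ => unvec v i j) v₀ := by
    intro i j
    by_cases hij : (j : ℕ) ≤ (i : ℕ)
    · simp only [unvec, Matrix.of_apply, dif_pos hij]
      exact (ContinuousLinearMap.proj (R := ℝ) (φ := fun _ : SymIdx k => ℝ)
        ⟨(i, j), hij⟩).differentiableAt
    · simp only [unvec, Matrix.of_apply, dif_neg hij]
      exact (ContinuousLinearMap.proj (R := ℝ) (φ := fun _ : SymIdx k => ℝ)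
        ⟨(j, i), le_of_not_ge hij⟩).differentiableAt
  have hN : DifferentiableAt ℝ (fun v : SymIdx k → ℝ => (unvec v).trace) v₀ := by
    simp only [Matrix.trace, Matrix.diag]
    exact DifferentiableAt.fun_sum fun i _ => h1 i i
  have hD : DifferentiableAt ℝ (fun v : SymIdx k → ℝ => oneSum (unvec v)) v₀ := by
    simp only [oneSum]
    exact DifferentiableAt.fun_sum fun i _ => DifferentiableAt.fun_sum fun j _ => h1 i j
  have heq : alphaVec k = fun v : SymIdx k → ℝ =>
      ((k : ℝ) / ((k : ℝ) - 1)) * (1 - (unvec v).trace / oneSum (unvec v)) := rfl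
  have hQ : DifferentiableAt ℝ
      (fun v : SymIdx k → ℝ => (unvec v).trace / oneSum (unvec v)) v₀ := by
    simp only [div_eq_mul_inv]
    exact hN.mul (hD.inv h)
  rw [heq]
  exact (differentiableAt_const _).mul ((differentiableAt_const _).sub hQ)

lemma sampleMean_apply {k n : ℕ} (X' : ℕ → Fin k → ℝ) (a : Fin k) :
    sampleMean k n X' a = (n : ℝ)⁻¹ * ∑ i ∈ range n, X' i a := by
  simp [sampleMean, Finset.sum_apply]

lemma sampleCov_apply {k n : ℕ} (X' : ℕ → Fin k → ℝ) (a b : Fin k) :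
    sampleCov k n X' a b = ((n : ℝ) - 1)⁻¹ *
      ∑ i ∈ range n, (X' i a - sampleMean k n X' a) * (X' i b - sampleMean k n X' b) := by
  simp [sampleCov, outer, Matrix.sum_apply, Matrix.smul_apply, smul_eq_mul]

lemma sampleCov_symm {k n : ℕ} (X' : ℕ → Fin k → ℝ) (a b : Fin k) :
    sampleCov k n X' a b = sampleCov k n X' b a := by
  rw [sampleCov_apply, sampleCov_apply]
  congr 1
  exact Finset.sum_congr rfl fun i _ => mul_comm _ _

lemma sampleCov_entry {k n : ℕ} (hn : n ≠ 0) (X' : ℕ → Fin k → ℝ) (a b : Fin k) :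
    sampleCov k n X' a b = ((n : ℝ) - 1)⁻¹ *
      ((∑ i ∈ range n, X' i a * X' i b)
        - (n : ℝ) * sampleMean k n X' a * sampleMean k n X' b) := by
  have hn' : (n : ℝ) ≠ 0 := Nat.cast_ne_zero.2 hn
  rw [sampleCov_apply]
  congr 1
  have hsa : ∑ i ∈ range n, X' i a = (n : ℝ) * sampleMean k n X' a := by
    rw [sampleMean_apply]; field_simp
  have hsb : ∑ i ∈ range n, X' i b = (n : ℝ) * sampleMean k n X' b := by
    rw [sampleMean_apply]; field_simp
  have expand : ∑ i ∈ range n, (X' i a - sampleMean k n X' a) * (X' i b - sampleMean k n X' b)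
      = (∑ i ∈ range n, X' i a * X' i b)
        - sampleMean k n X' a * (∑ i ∈ range n, X' i b)
        - sampleMean k n X' b * (∑ i ∈ range n, X' i a)
        + (n : ℝ) * (sampleMean k n X' a * sampleMean k n X' b) := by
    rw [Finset.sum_congr rfl (fun i _ => by ring :
      ∀ i ∈ range n, (X' i a - sampleMean k n X' a) * (X' i b - sampleMean k n X' b)
        = X' i a * X' i b - sampleMean k n X' a * X' i b
          - sampleMean k n X' b * X' i a + sampleMean k n X' a * sampleMean k n X' b)]
    rw [Finset.sum_add_distrib, Finset.sum_sub_distrib, Finset.sum_sub_distrib,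
      ← Finset.mul_sum, ← Finset.mul_sum, Finset.sum_const, Finset.card_range, nsmul_eq_mul]
  rw [expand, hsa, hsb]
  ring

end MatLems

section Decomp
open Finset

lemma comp_decomp {k : ℕ} {n : ℕ} (hn : 2 ≤ n) (X' : ℕ → Fin k → ℝ)
    (S : Matrix (Fin k) (Fin k) ℝ) (p : SymIdx k) :
    Real.sqrt n * (vecm (sampleCov k n X') p - vecm S p)
      = (Real.sqrt n)⁻¹ * ∑ i ∈ range n, (X' i p.1.1 * X' i p.1.2 - S p.1.1 p.1.2)
        + (Real.sqrt n)⁻¹ * (((n:ℝ)/((n:ℝ)-1))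
            * (((n:ℝ))⁻¹ * ∑ i ∈ range n, X' i p.1.1 * X' i p.1.2))
        - ((Real.sqrt n)⁻¹ * ∑ i ∈ range n, X' i p.1.1)
            * (((n:ℝ)/((n:ℝ)-1)) * sampleMean k n X' p.1.2) := by
  have hn0 : n ≠ 0 := by omega
  have hnR : (2:ℝ) ≤ (n:ℝ) := by exact_mod_cast hn
  have hne : (n:ℝ) ≠ 0 := by linarith
  have hne1 : (n:ℝ) - 1 ≠ 0 := by linarith
  have hsp : 0 < Real.sqrt n := Real.sqrt_pos.2 (by linarith)
  have hss : Real.sqrt n * Real.sqrt n = (n:ℝ) := Real.mul_self_sqrt (by linarith)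
  have hQ : ∑ i ∈ range n, X' i p.1.1 = (n:ℝ) * sampleMean k n X' p.1.1 := by
    rw [sampleMean_apply]; field_simp
  have hsum : ∑ i ∈ range n, (X' i p.1.1 * X' i p.1.2 - S p.1.1 p.1.2)
      = (∑ i ∈ range n, X' i p.1.1 * X' i p.1.2) - (n:ℝ) * S p.1.1 p.1.2 := by
    rw [Finset.sum_sub_distrib, Finset.sum_const, Finset.card_range, nsmul_eq_mul]
  have hvec : vecm (sampleCov k n X') p = ((n:ℝ)-1)⁻¹ *
      ((∑ i ∈ range n, X' i p.1.1 * X' i p.1.2)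
        - (n:ℝ) * sampleMean k n X' p.1.1 * sampleMean k n X' p.1.2) :=
    sampleCov_entry hn0 X' p.1.1 p.1.2
  have hvS : vecm S p = S p.1.1 p.1.2 := rfl
  rw [hvec, hvS, hsum, hQ]
  generalize sampleMean k n X' p.1.1 = A
  generalize sampleMean k n X' p.1.2 = B
  generalize (∑ i ∈ range n, X' i p.1.1 * X' i p.1.2) = P
  generalize S p.1.1 p.1.2 = C
  set s : ℝ := Real.sqrt n with hsdef
  have hn_eq : ((n:ℝ)) = s * s := hss.symm
  rw [hn_eq]
  have hne1' : s * s - 1 ≠ 0 := by rw [← hn_eq]; exact hne1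
  have hsne : s ≠ 0 := ne_of_gt hsp
  field_simp
  have h7 : (-1 + s ^ 2)⁻¹ * (-1 + s ^ 2) = 1 :=
    inv_mul_cancel₀ (by rw [neg_add_eq_sub, pow_two]; exact hne1')
  linear_combination P * h7
end Decomp
set_option maxHeartbeats 2000000 in
set_option synthInstance.maxHeartbeats 1000000 in
/-- asymptotic linearity of the sample Cronbach alpha,
with influence function `f_Σ(x) = δ(Σ)'·vec(xx' - Σ)`. -/
theorem cronbachAlpha_asymptoticallyLinear
    {Ω : Type*} [MeasurableSpace Ω] (μ : MeasureTheory.Measure Ω) [IsProbabilityMeasure μ]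
    (k : ℕ) (X : ℕ → Ω → (Fin k → ℝ)) (hmeas : ∀ i, Measurable (X i))
    (hindep : iIndepFun X μ)
    (hident : ∀ i, IdentDistrib (X i) (X 0) μ μ)
    (hmean : ∀ a, ∫ ω, X 0 ω a ∂μ = 0)
    (hmom : Integrable (fun ω => ‖X 0 ω‖ ^ 4) μ)
    (S : Matrix (Fin k) (Fin k) ℝ)
    (hS : ∀ a b, S a b = ∫ ω, X 0 ω a * X 0 ω b ∂μ)
    (hk : 2 ≤ k) (hpos : 0 < oneSum S) :
    TendstoInMeasure μ
      (fun (n : ℕ) ω =>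
        Real.sqrt (n : ℝ) * (alphaC (sampleCov k n fun i => X i ω) - alphaC S)
          - (Real.sqrt (n : ℝ))⁻¹ *
            ∑ i ∈ range n, ∑ p, deltaVec S p * vecm (outer (X i ω) - S) p)
      atTop 0 := by
  -- ## basic measurability
  have hXa : ∀ (i : ℕ) (a : Fin k), Measurable fun ω => X i ω a :=
    fun i a => (measurable_pi_apply a).comp (hmeas i)
  have hdom : Integrable (fun ω => 1 + ‖X 0 ω‖ ^ 4) μ := (integrable_const 1).add hmom
  -- ## basic integrability bounds
  have hbound2 : ∀ (v : Fin k → ℝ) (a b : Fin k), |v a * v b| ≤ 1 + ‖v‖ ^ 4 := by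
    intro v a b
    have h1 : |v a| ≤ ‖v‖ := by simpa [Real.norm_eq_abs] using norm_le_pi_norm v a
    have h2 : |v b| ≤ ‖v‖ := by simpa [Real.norm_eq_abs] using norm_le_pi_norm v b
    have h0 : (0:ℝ) ≤ ‖v‖ := norm_nonneg v
    rw [abs_mul]
    nlinarith [abs_nonneg (v a), abs_nonneg (v b), sq_nonneg (‖v‖ ^ 2 - 1)]
  have hbound1 : ∀ (v : Fin k → ℝ) (a : Fin k), |v a| ≤ 1 + ‖v‖ ^ 4 := by
    intro v a
    have h1 : |v a| ≤ ‖v‖ := by simpa [Real.norm_eq_abs] using norm_le_pi_norm v a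
    have h0 : (0:ℝ) ≤ ‖v‖ := norm_nonneg v
    have hkey : ‖v‖ ≤ 1 + ‖v‖ ^ 4 := by
      rcases le_or_gt ‖v‖ 1 with h | h
      · nlinarith [pow_nonneg h0 4]
      · have h4 : ‖v‖ ^ 1 ≤ ‖v‖ ^ 4 := pow_le_pow_right₀ h.le (by norm_num)
        simp only [pow_one] at h4
        linarith
    linarith
  have hbound4 : ∀ (v : Fin k → ℝ) (a b : Fin k), |(v a * v b) ^ 2| ≤ 1 + ‖v‖ ^ 4 := by
    intro v a b
    have h1 : |v a| ≤ ‖v‖ := by simpa [Real.norm_eq_abs] using norm_le_pi_norm v a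
    have h2 : |v b| ≤ ‖v‖ := by simpa [Real.norm_eq_abs] using norm_le_pi_norm v b
    have h0 : (0:ℝ) ≤ ‖v‖ := norm_nonneg v
    have ha := abs_nonneg (v a); have hb := abs_nonneg (v b)
    rw [abs_of_nonneg (sq_nonneg _)]
    have : (v a * v b) ^ 2 = |v a| ^ 2 * |v b| ^ 2 := by
      rw [← abs_pow, ← abs_pow, ← abs_mul]
      rw [abs_of_nonneg (by positivity : (0:ℝ) ≤ (v a)^2 * (v b)^2)]
      ring
    rw [this]
    nlinarith [mul_le_mul (pow_le_pow_left₀ ha h1 2) (pow_le_pow_left₀ hb h2 2)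
      (pow_nonneg hb 2) (pow_nonneg h0 2)]
  have hbound1sq : ∀ (v : Fin k → ℝ) (a : Fin k), |(v a) ^ 2| ≤ 1 + ‖v‖ ^ 4 := by
    intro v a
    have h1 : |v a| ≤ ‖v‖ := by simpa [Real.norm_eq_abs] using norm_le_pi_norm v a
    have h0 : (0:ℝ) ≤ ‖v‖ := norm_nonneg v
    rw [abs_of_nonneg (sq_nonneg _)]
    nlinarith [pow_le_pow_left₀ (abs_nonneg (v a)) h1 2, sq_nonneg (‖v‖ ^ 2 - 1),
      sq_abs (v a)]
  have hdom_norm : ∀ᵐ ω ∂μ, ∀ r : ℝ, |r| ≤ 1 + ‖X 0 ω‖ ^ 4 → ‖r‖ ≤ ‖1 + ‖X 0 ω‖ ^ 4‖ := by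
    filter_upwards with ω r hr
    rw [Real.norm_eq_abs, Real.norm_eq_abs, abs_of_nonneg (by positivity : (0:ℝ) ≤ 1 + ‖X 0 ω‖ ^ 4)]
    exact hr
  have h_int_prod : ∀ a b : Fin k, Integrable (fun ω => X 0 ω a * X 0 ω b) μ := by
    intro a b
    refine hdom.mono ((hXa 0 a).mul (hXa 0 b)).aestronglyMeasurable ?_
    filter_upwards [hdom_norm] with ω h
    exact h _ (hbound2 (X 0 ω) a b)
  have h_sq_prod : ∀ a b : Fin k, Integrable (fun ω => (X 0 ω a * X 0 ω b) ^ 2) μ := by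
    intro a b
    refine hdom.mono (((hXa 0 a).mul (hXa 0 b)).pow_const 2).aestronglyMeasurable ?_
    filter_upwards [hdom_norm] with ω h
    exact h _ (hbound4 (X 0 ω) a b)
  have h_int_a : ∀ a : Fin k, Integrable (fun ω => X 0 ω a) μ := by
    intro a
    refine hdom.mono (hXa 0 a).aestronglyMeasurable ?_
    filter_upwards [hdom_norm] with ω h
    exact h _ (hbound1 (X 0 ω) a)
  have h_sq_a : ∀ a : Fin k, Integrable (fun ω => (X 0 ω a) ^ 2) μ := by
    intro a
    refine hdom.mono ((hXa 0 a).pow_const 2).aestronglyMeasurable ?_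
    filter_upwards [hdom_norm] with ω h
    exact h _ (hbound1sq (X 0 ω) a)
  -- ## generic iid transfers
  have hgen_ident : ∀ (g : (Fin k → ℝ) → ℝ), Measurable g → ∀ i,
      IdentDistrib (fun ω => g (X i ω)) (fun ω => g (X 0 ω)) μ μ :=
    fun g hg i => (hident i).comp hg
  have hgen_indep : ∀ (g : (Fin k → ℝ) → ℝ), Measurable g → ∀ i j, i ≠ j →
      IndepFun (fun ω => g (X i ω)) (fun ω => g (X j ω)) μ :=
    fun g hg i j hij => (hindep.indepFun hij).comp hg hg
  -- ## strong law of large numbers, generic form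
  have slln : ∀ (g : (Fin k → ℝ) → ℝ), Measurable g → Integrable (fun ω => g (X 0 ω)) μ →
      ∀ᵐ ω ∂μ, Tendsto (fun n : ℕ => (n : ℝ)⁻¹ * ∑ i ∈ range n, g (X i ω)) atTop
        (nhds (∫ ω, g (X 0 ω) ∂μ)) := by
    intro g hg hint
    have h := strong_law_ae_real (fun i ω => g (X i ω)) hint
      (fun i j hij => hgen_indep g hg i j hij) (fun i => hgen_ident g hg i)
    filter_upwards [h] with ω hω
    simpa only [div_eq_inv_mul] using hω
  -- ## tightness of normalized centered sums, generic form
  have tightSum : ∀ (g : (Fin k → ℝ) → ℝ), Measurable g →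
      Integrable (fun ω => (g (X 0 ω)) ^ 2) μ → (∫ ω, g (X 0 ω) ∂μ) = 0 →
      MyTight μ (fun (n : ℕ) ω => (Real.sqrt n)⁻¹ * ∑ i ∈ range n, g (X i ω)) := by
    intro g hg hg2 hgmean
    have hmemi : ∀ i, MemLp (fun ω => g (X i ω)) 2 μ := by
      intro i
      refine (memLp_two_iff_integrable_sq ((hg.comp (hmeas i)).aestronglyMeasurable)).2 ?_
      have hid2 : IdentDistrib (fun ω => (g (X i ω)) ^ 2) (fun ω => (g (X 0 ω)) ^ 2) μ μ :=
        (hgen_ident g hg i).comp (measurable_id.pow_const 2)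
      exact hid2.integrable_iff.2 hg2
    have hinti : ∀ i, Integrable (fun ω => g (X i ω)) μ :=
      fun i => (hmemi i).integrable one_le_two
    have hmeani : ∀ i, ∫ ω, g (X i ω) ∂μ = 0 :=
      fun i => ((hgen_ident g hg i).integral_eq).trans hgmean
    refine myTight_of_variance (C := variance (fun ω => g (X 0 ω)) μ) ?_ ?_ ?_
    · intro n
      have heq : (fun ω => (Real.sqrt n)⁻¹ * ∑ i ∈ range n, g (X i ω))
          = (Real.sqrt n)⁻¹ • (∑ i ∈ range n, fun ω => g (X i ω)) := by
        funext ω; simp [Finset.sum_apply]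
      rw [heq]
      exact MemLp.const_smul (memLp_finset_sum' (ε' := ℝ) _ fun i _ => hmemi i) _
    · intro n
      rw [integral_const_mul, integral_finset_sum _ fun i _ => hinti i]
      simp [hmeani]
    · intro n
      rcases Nat.eq_zero_or_pos n with h0 | hpos'
      · subst h0
        have heq : (fun ω => (Real.sqrt ((0:ℕ):ℝ))⁻¹ * ∑ i ∈ range 0, g (X i ω))
            = (fun _ : Ω => (0:ℝ)) := by funext ω; simp
        rw [heq]
        have h0 : variance (fun _ : Ω => (0:ℝ)) μ = 0 := variance_zero μ
        rw [h0]
        exact variance_nonneg (fun ω => g (X 0 ω)) μ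
      · have hn' : ((n:ℝ)) ≠ 0 := Nat.cast_ne_zero.2 hpos'.ne'
        have hsq : Real.sqrt n ^ 2 = (n:ℝ) := Real.sq_sqrt (Nat.cast_nonneg n)
        have heq : (fun ω => (Real.sqrt n)⁻¹ * ∑ i ∈ range n, g (X i ω))
            = (Real.sqrt n)⁻¹ • (∑ i ∈ range n, fun ω => g (X i ω)) := by
          funext ω; simp [Finset.sum_apply]
        rw [heq, variance_smul]
        have h1 : variance (∑ i ∈ range n, fun ω => g (X i ω)) μ
            = ∑ i ∈ range n, variance (fun ω => g (X i ω)) μ :=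
          IndepFun.variance_sum (fun i _ => hmemi i)
            (fun i _ j _ hij => hgen_indep g hg i j hij)
        rw [h1, Finset.sum_congr rfl fun i _ => (hgen_ident g hg i).variance_eq,
          Finset.sum_const, Finset.card_range, nsmul_eq_mul, inv_pow, hsq,
          ← mul_assoc, inv_mul_cancel₀ hn', one_mul]
  -- ## a.e. limits
  have haeP : ∀ᵐ ω ∂μ, ∀ (a b : Fin k),
      Tendsto (fun n : ℕ => (n:ℝ)⁻¹ * ∑ i ∈ range n, X i ω a * X i ω b) atTop (nhds (S a b)) := by
    rw [ae_all_iff]; intro a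
    rw [ae_all_iff]; intro b
    have h := slln (fun v => v a * v b) ((measurable_pi_apply a).mul (measurable_pi_apply b))
      (h_int_prod a b)
    rw [← hS a b] at h
    exact h
  have haeM : ∀ᵐ ω ∂μ, ∀ a : Fin k,
      Tendsto (fun n : ℕ => (n:ℝ)⁻¹ * ∑ i ∈ range n, X i ω a) atTop (nhds 0) := by
    rw [ae_all_iff]; intro a
    have h := slln (fun v => v a) (measurable_pi_apply a) (h_int_a a)
    rw [hmean a] at h
    exact h
  -- ## deterministic limits
  have hd1 : Tendsto (fun n : ℕ => ((n:ℝ) - 1)⁻¹) atTop (nhds 0) :=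
    (tendsto_atTop_add_const_right _ _ tendsto_natCast_atTop_atTop).inv_tendsto_atTop
  have hd : Tendsto (fun n : ℕ => (n:ℝ)/((n:ℝ)-1)) atTop (nhds 1) := by
    have h2 : Tendsto (fun n : ℕ => 1 + ((n:ℝ)-1)⁻¹) atTop (nhds 1) := by
      simpa using tendsto_const_nhds.add hd1
    refine h2.congr' ?_
    filter_upwards [eventually_ge_atTop 2] with n hn
    have hn' : ((n:ℝ) - 1) ≠ 0 := by
      have : (2:ℝ) ≤ (n:ℝ) := by exact_mod_cast hn
      linarith
    field_simp
    ring
  have hsqinv : Tendsto (fun n : ℕ => (Real.sqrt n)⁻¹) atTop (nhds 0) := by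
    have h2 := (Real.continuous_sqrt.tendsto 0).comp tendsto_inv_atTop_nhds_zero_nat
    simp only [Real.sqrt_zero] at h2
    exact h2.congr fun n => Real.sqrt_inv _
  -- ## symmetry / derivative setup
  have hSsymm : ∀ a b, S a b = S b a := by
    intro a b; rw [hS a b, hS b a]
    exact integral_congr_ae (Eventually.of_forall fun ω => mul_comm _ _)
  have hSv : unvec (vecm S) = S := unvec_vecm hSsymm
  have honene : oneSum (unvec (vecm S)) ≠ 0 := by rw [hSv]; exact ne_of_gt hpos
  have hdiff : DifferentiableAt ℝ (alphaVec k) (vecm S) := differentiableAt_alphaVec honene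
  set v₀ : SymIdx k → ℝ := vecm S with hv₀def
  set L : (SymIdx k → ℝ) →L[ℝ] ℝ := fderiv ℝ (alphaVec k) v₀ with hLdef
  have hder : HasFDerivAt (alphaVec k) L v₀ := hdiff.hasFDerivAt
  have hdelta : ∀ p, deltaVec S p = L ((Pi.single p (1:ℝ) : SymIdx k → ℝ)) := fun p => rfl
  have hLw : ∀ w : SymIdx k → ℝ, L w = ∑ p, deltaVec S p * w p := by
    intro w
    have h1 : ∀ p : SymIdx k,
        w p • (Pi.single p (1:ℝ) : SymIdx k → ℝ) = (Pi.single p (w p) : SymIdx k → ℝ) := by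
      intro p
      funext q
      simp [Pi.single_apply, Pi.smul_apply, smul_eq_mul, mul_ite]
    have hw : w = ∑ p : SymIdx k, w p • (Pi.single p (1:ℝ) : SymIdx k → ℝ) := by
      rw [Finset.sum_congr rfl fun p _ => h1 p, Finset.univ_sum_single]
    nth_rewrite 1 [hw]
    rw [map_sum]
    refine Finset.sum_congr rfl fun p _ => ?_
    rw [_root_.map_smul, smul_eq_mul, hdelta p]
    exact mul_comm _ _
  -- ## the vectorized sample covariance process
  set Y : ℕ → Ω → SymIdx k → ℝ := fun n ω => vecm (sampleCov k n fun i => X i ω) with hYdef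
  have hMsum : ∀ (n : ℕ) (a b : Fin k), Measurable (fun ω => ∑ i ∈ range n, X i ω a * X i ω b) :=
    fun n a b => Finset.measurable_sum _ fun i _ => (hXa i a).mul (hXa i b)
  have hMsuma : ∀ (n : ℕ) (a : Fin k), Measurable (fun ω => ∑ i ∈ range n, X i ω a) :=
    fun n a => Finset.measurable_sum _ fun i _ => hXa i a
  have hMmean : ∀ (n : ℕ) (b : Fin k), Measurable (fun ω => sampleMean k n (fun i => X i ω) b) := by
    intro n b
    have heq : (fun ω => sampleMean k n (fun i => X i ω) b)
        = fun ω => (n:ℝ)⁻¹ * ∑ i ∈ range n, X i ω b := by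
      funext ω; rw [sampleMean_apply]
    rw [heq]
    exact (hMsuma n b).const_mul _
  have hMcov : ∀ (n : ℕ) (p : SymIdx k),
      Measurable (fun ω => Y n ω p) := by
    intro n p
    have heq : (fun ω => Y n ω p) = fun ω => ((n:ℝ)-1)⁻¹ *
        ∑ i ∈ range n, (X i ω p.1.1 - sampleMean k n (fun j => X j ω) p.1.1)
          * (X i ω p.1.2 - sampleMean k n (fun j => X j ω) p.1.2) := by
      funext ω; exact sampleCov_apply _ p.1.1 p.1.2
    rw [heq]
    exact (Finset.measurable_sum _ fun i _ =>
      ((hXa i p.1.1).sub (hMmean n p.1.1)).mul ((hXa i p.1.2).sub (hMmean n p.1.2))).const_mul _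
  have hYmeas : ∀ n, Measurable (Y n) := fun n => measurable_pi_lambda _ (hMcov n)
  -- a.e. convergence of Y to v₀
  have haeY : ∀ᵐ ω ∂μ, Tendsto (fun n => Y n ω) atTop (nhds v₀) := by
    filter_upwards [haeP, haeM] with ω hωP hωM
    rw [tendsto_pi_nhds]
    intro p
    have hv₀p : v₀ p = S p.1.1 p.1.2 := rfl
    rw [hv₀p]
    have hlim : Tendsto (fun n : ℕ =>
        ((n:ℝ)/((n:ℝ)-1)) * ((n:ℝ)⁻¹ * ∑ i ∈ range n, X i ω p.1.1 * X i ω p.1.2)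
          - ((n:ℝ)/((n:ℝ)-1)) * (((n:ℝ)⁻¹ * ∑ i ∈ range n, X i ω p.1.1)
              * ((n:ℝ)⁻¹ * ∑ i ∈ range n, X i ω p.1.2))) atTop (nhds (S p.1.1 p.1.2)) := by
      have := (hd.mul (hωP p.1.1 p.1.2)).sub (hd.mul ((hωM p.1.1).mul (hωM p.1.2)))
      simpa using this
    refine hlim.congr' ?_
    filter_upwards [eventually_ge_atTop 2] with n hn
    have hn0 : n ≠ 0 := by omega
    have hnR : (2:ℝ) ≤ (n:ℝ) := by exact_mod_cast hn
    have hne : (n:ℝ) ≠ 0 := by linarith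
    have hne1 : (n:ℝ) - 1 ≠ 0 := by linarith
    have : Y n ω p = ((n:ℝ)-1)⁻¹ * ((∑ i ∈ range n, X i ω p.1.1 * X i ω p.1.2)
        - (n:ℝ) * (((n:ℝ))⁻¹ * ∑ i ∈ range n, X i ω p.1.1)
          * (((n:ℝ))⁻¹ * ∑ i ∈ range n, X i ω p.1.2)) := by
      have := sampleCov_entry hn0 (fun i => X i ω) p.1.1 p.1.2
      rw [sampleMean_apply, sampleMean_apply] at this
      exact this
    rw [this]
    field_simp
  -- ## tightness of the per-coordinate pieces
  have htightW1 : ∀ p : SymIdx k, MyTight μ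
      (fun (n:ℕ) ω => (Real.sqrt n)⁻¹
        * ∑ i ∈ range n, (X i ω p.1.1 * X i ω p.1.2 - S p.1.1 p.1.2)) := by
    intro p
    have hg : Measurable (fun v : Fin k → ℝ => v p.1.1 * v p.1.2 - S p.1.1 p.1.2) :=
      ((measurable_pi_apply p.1.1).mul (measurable_pi_apply p.1.2)).sub measurable_const
    have hsq : Integrable (fun ω => (X 0 ω p.1.1 * X 0 ω p.1.2 - S p.1.1 p.1.2) ^ 2) μ := by
      have heq : (fun ω => (X 0 ω p.1.1 * X 0 ω p.1.2 - S p.1.1 p.1.2) ^ 2)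
          = fun ω => (X 0 ω p.1.1 * X 0 ω p.1.2) ^ 2
            - (2 * S p.1.1 p.1.2) * (X 0 ω p.1.1 * X 0 ω p.1.2) + (S p.1.1 p.1.2) ^ 2 := by
        funext ω; ring
      rw [heq]
      exact ((h_sq_prod _ _).sub ((h_int_prod _ _).const_mul _)).add (integrable_const _)
    have hmean0 : ∫ ω, (X 0 ω p.1.1 * X 0 ω p.1.2 - S p.1.1 p.1.2) ∂μ = 0 := by
      rw [integral_sub (h_int_prod _ _) (integrable_const _), integral_const]
      simp [← hS p.1.1 p.1.2]
    exact tightSum _ hg hsq hmean0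
  have htightG : ∀ a : Fin k, MyTight μ
      (fun (n:ℕ) ω => (Real.sqrt n)⁻¹ * ∑ i ∈ range n, X i ω a) :=
    fun a => tightSum _ (measurable_pi_apply a) (h_sq_a a) (hmean a)
  -- ## the E-terms tend to zero in measure
  have htimE1 : ∀ p : SymIdx k, TendstoInMeasure μ
      (fun (n:ℕ) ω => (Real.sqrt n)⁻¹ * (((n:ℝ)/((n:ℝ)-1))
        * (((n:ℝ))⁻¹ * ∑ i ∈ range n, X i ω p.1.1 * X i ω p.1.2))) atTop 0 := by
    intro p
    refine tendstoInMeasure_of_tendsto_ae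
      (fun n => ((((hMsum n p.1.1 p.1.2).const_mul _).const_mul _).const_mul _).aestronglyMeasurable) ?_
    filter_upwards [haeP] with ω hω
    have h := hsqinv.mul (hd.mul (hω p.1.1 p.1.2))
    simp only [Pi.zero_apply]
    simpa using h
  have htimV : ∀ b : Fin k, TendstoInMeasure μ
      (fun (n:ℕ) ω => ((n:ℝ)/((n:ℝ)-1)) * sampleMean k n (fun i => X i ω) b) atTop 0 := by
    intro b
    refine tendstoInMeasure_of_tendsto_ae
      (fun n => ((hMmean n b).const_mul _).aestronglyMeasurable) ?_
    filter_upwards [haeM] with ω hω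
    have h1 : Tendsto (fun n:ℕ => ((n:ℝ)/((n:ℝ)-1)) * ((n:ℝ)⁻¹ * ∑ i ∈ range n, X i ω b))
        atTop (nhds 0) := by simpa using hd.mul (hω b)
    simp only [Pi.zero_apply]
    refine h1.congr fun n => ?_
    rw [sampleMean_apply]
  have htimE2 : ∀ p : SymIdx k, TendstoInMeasure μ
      (fun (n:ℕ) ω => ((Real.sqrt n)⁻¹ * ∑ i ∈ range n, X i ω p.1.1)
        * (((n:ℝ)/((n:ℝ)-1)) * sampleMean k n (fun i => X i ω) p.1.2)) atTop 0 :=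
    fun p => tight_mul_tim (htightG p.1.1) (htimV p.1.2)
  -- ## per-coordinate tightness of √n (Y - v₀)
  have htightP : ∀ p : SymIdx k, MyTight μ
      (fun (n:ℕ) ω => Real.sqrt n * (Y n ω p - v₀ p)) := by
    intro p
    have h1 := myTight_add (myTight_add (htightW1 p) (myTight_of_tim (htimE1 p)))
      (myTight_of_tim (tim_neg (htimE2 p)))
    refine myTight_congr ?_ h1
    filter_upwards [eventually_ge_atTop 2] with n hn ω
    have h := comp_decomp hn (fun i => X i ω) S p
    simp only [hYdef, hv₀def]
    rw [h]
    ring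
  -- ## tightness of √n ‖Y - v₀‖
  have htightNorm : MyTight μ (fun (n:ℕ) ω => Real.sqrt n * ‖Y n ω - v₀‖) := by
    have hsum := myTight_sum (Finset.univ : Finset (SymIdx k))
      (fun p (n:ℕ) ω => |Real.sqrt n * (Y n ω p - v₀ p)|)
      (fun p _ => myTight_abs (htightP p))
    refine myTight_mono ?_ hsum
    filter_upwards with n ω
    have hs0 : (0:ℝ) ≤ Real.sqrt n := Real.sqrt_nonneg _
    have h1 : ‖Y n ω - v₀‖ ≤ ∑ p : SymIdx k, |Y n ω p - v₀ p| := by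
      refine (pi_norm_le_iff_of_nonneg (Finset.sum_nonneg fun p _ => abs_nonneg _)).2 fun p => ?_
      calc ‖(Y n ω - v₀) p‖ = |Y n ω p - v₀ p| := by rw [Real.norm_eq_abs]; rfl
        _ ≤ ∑ q : SymIdx k, |Y n ω q - v₀ q| :=
            Finset.single_le_sum (f := fun q : SymIdx k => |Y n ω q - v₀ q|)
              (fun q _ => abs_nonneg _) (Finset.mem_univ p)
    have h2 : |Real.sqrt n * ‖Y n ω - v₀‖| = Real.sqrt n * ‖Y n ω - v₀‖ :=
      abs_of_nonneg (mul_nonneg hs0 (norm_nonneg _))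
    have h3 : abs (∑ p : SymIdx k, |Real.sqrt n * (Y n ω p - v₀ p)|)
        = ∑ p : SymIdx k, |Real.sqrt n * (Y n ω p - v₀ p)| :=
      abs_of_nonneg (Finset.sum_nonneg fun p _ => abs_nonneg _)
    rw [h2, h3]
    calc Real.sqrt n * ‖Y n ω - v₀‖ ≤ Real.sqrt n * ∑ p : SymIdx k, |Y n ω p - v₀ p| :=
          mul_le_mul_of_nonneg_left h1 hs0
      _ = ∑ p : SymIdx k, |Real.sqrt n * (Y n ω p - v₀ p)| := by
          rw [Finset.mul_sum]
          exact Finset.sum_congr rfl fun p _ => by rw [abs_mul, abs_of_nonneg hs0]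
  -- ## the linearization remainder tends to zero in measure
  have htimA : TendstoInMeasure μ
      (fun (n:ℕ) ω => Real.sqrt n
        * (alphaVec k (Y n ω) - alphaVec k v₀ - L (Y n ω - v₀))) atTop 0 :=
    tim_remainder hder (fun n => (hYmeas n).aestronglyMeasurable) haeY htightNorm
  -- ## combined E-terms per coordinate
  have htimE : ∀ p : SymIdx k, TendstoInMeasure μ
      (fun (n:ℕ) ω => deltaVec S p * ((Real.sqrt n)⁻¹ * (((n:ℝ)/((n:ℝ)-1))
          * (((n:ℝ))⁻¹ * ∑ i ∈ range n, X i ω p.1.1 * X i ω p.1.2)))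
        - deltaVec S p * (((Real.sqrt n)⁻¹ * ∑ i ∈ range n, X i ω p.1.1)
          * (((n:ℝ)/((n:ℝ)-1)) * sampleMean k n (fun i => X i ω) p.1.2))) atTop 0 := by
    intro p
    have h1 := tim_add (tim_const_mul (deltaVec S p) (htimE1 p))
      (tim_neg (tim_const_mul (deltaVec S p) (htimE2 p)))
    refine tim_congr ?_ h1
    filter_upwards with n ω
    ring
  have htimSum := tim_sum (Finset.univ : Finset (SymIdx k)) _ (fun p _ => htimE p)
  -- ## final assembly
  have hfinal := tim_add htimA htimSum
  refine tim_congr ?_ hfinal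
  filter_upwards [eventually_ge_atTop 2] with n hn ω
  have h1 : alphaVec k (Y n ω) = alphaC (sampleCov k n fun i => X i ω) := by
    simp only [hYdef]
    show alphaC (unvec (vecm _)) = _
    rw [unvec_vecm (fun a b => sampleCov_symm _ a b)]
  have h2 : alphaVec k v₀ = alphaC S := by
    rw [show alphaVec k v₀ = alphaC (unvec v₀) from rfl, hSv]
  have h3 : L (Y n ω - v₀) = ∑ p : SymIdx k, deltaVec S p * (Y n ω p - v₀ p) :=
    (hLw _).trans (Finset.sum_congr rfl fun p _ => rfl)
  have h5 : ∑ i ∈ range n, ∑ p : SymIdx k, deltaVec S p * vecm (outer (X i ω) - S) p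
      = ∑ p : SymIdx k, deltaVec S p
          * ∑ i ∈ range n, (X i ω p.1.1 * X i ω p.1.2 - S p.1.1 p.1.2) := by
    rw [Finset.sum_comm]
    refine Finset.sum_congr rfl fun p _ => ?_
    rw [Finset.mul_sum]
    refine Finset.sum_congr rfl fun i _ => ?_
    congr 1
  have hR : (Real.sqrt n)⁻¹ * ∑ p : SymIdx k, deltaVec S p
        * ∑ i ∈ range n, (X i ω p.1.1 * X i ω p.1.2 - S p.1.1 p.1.2)
      = Real.sqrt n * (∑ p : SymIdx k, deltaVec S p * (Y n ω p - v₀ p))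
        - ∑ p : SymIdx k, (deltaVec S p * ((Real.sqrt n)⁻¹ * (((n:ℝ)/((n:ℝ)-1))
            * (((n:ℝ))⁻¹ * ∑ i ∈ range n, X i ω p.1.1 * X i ω p.1.2)))
          - deltaVec S p * (((Real.sqrt n)⁻¹ * ∑ i ∈ range n, X i ω p.1.1)
            * (((n:ℝ)/((n:ℝ)-1)) * sampleMean k n (fun i => X i ω) p.1.2))) := by
    rw [Finset.mul_sum, Finset.mul_sum, ← Finset.sum_sub_distrib]
    refine Finset.sum_congr rfl fun p _ => ?_
    have h := comp_decomp hn (fun i => X i ω) S p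
    simp only [hYdef, hv₀def]
    linear_combination (-(deltaVec S p)) * h
  rw [h1, h2, h3] at *
  rw [h5, hR]
  ring
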